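/- Every α in Z^{1,9} with α·ω_0 = 0, α^2 = -2, and 0 ≤ α·ω_d ≤ min(d-1, 6) where ω_d = 3h - (e_1+...+e_n), n = 9-d, and α·ω_d ≥ 1, is of one of the forms: e_i - e_j with i ≠ j; h - e_J with J a 3-element subset of {1,...,9}; 2h - e_J with J a 6-element subset of {1,...,9}; or ω_0 - e_i + e_j with i ≠ j (the latter only when α·ω_d = d-1 ≤ 6), where e_J = Σ_{i∈J} e_i. -/

import Mathlib

open Finset

/-- The lattice `Z^{1,9}` as integer vectors indexed by `Fin 10`:
coordinate `0` is `h`, coordinates `1,…,9` are `e_1,…,e_9`. -/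
abbrev V : Type := Fin 10 → ℤ

/-- The Minkowski bilinear form: `h·h = 1`, `e_i·e_i = -1`, distinct basis vectors orthogonal. -/
def form (v w : V) : ℤ := v 0 * w 0 - ∑ i : Fin 9, v i.succ * w i.succ

/-- The basis vector `h`. -/
def hvec : V := Pi.single 0 1

/-- The basis vector `e_{i+1}` (so `evec i` for `i : Fin 9` is `e_1,…,e_9`). -/
def evec (i : Fin 9) : V := Pi.single i.succ 1

/-- `ω_d = 3h - (e_1 + … + e_n)`, recorded as a function of `n`. -/
def omegaV (n : ℕ) : V :=
  (3 : ℤ) • hvec - ∑ i ∈ Finset.univ.filter (fun i : Fin 9 => (i : ℕ) < n), evec i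

/-- `ω_0 = 3h - (e_1 + … + e_9)`. -/
def omega0 : V := omegaV 9

lemma hvec_zero : hvec 0 = 1 := rfl
lemma hvec_succ (j : Fin 9) : hvec j.succ = 0 :=
  Pi.single_eq_of_ne (Fin.succ_ne_zero j) 1
lemma evec_zero (i : Fin 9) : evec i 0 = 0 :=
  Pi.single_eq_of_ne (Fin.succ_ne_zero i).symm 1
lemma evec_succ (i j : Fin 9) : evec i j.succ = if j = i then 1 else 0 := by
  rw [evec, Pi.single_apply]; simp [Fin.succ_inj]
lemma omegaV_zero (n : ℕ) : omegaV n 0 = 3 := by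
  simp [omegaV, hvec_zero, evec_zero]
lemma omegaV_succ (n : ℕ) (j : Fin 9) :
    omegaV n j.succ = if (j : ℕ) < n then -1 else 0 := by
  simp only [omegaV, Pi.sub_apply, Pi.smul_apply, Finset.sum_apply, hvec_succ, evec_succ,
    smul_eq_mul, mul_zero]
  rw [Finset.sum_ite_eq]
  simp only [Finset.mem_filter, Finset.mem_univ, true_and]
  split <;> simp
lemma card_lt (n : ℕ) (hn : n ≤ 9) :
    (Finset.univ.filter (fun i : Fin 9 => (i : ℕ) < n)).card = n := by
  interval_cases n <;> decide
lemma card_ge (n : ℕ) (hn : n ≤ 9) :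
    (Finset.univ.filter (fun i : Fin 9 => ¬ (i : ℕ) < n)).card = 9 - n := by
  interval_cases n <;> decide


set_option maxHeartbeats 2000000 in
/-- enumeration of the real roots `α` with `1 ≤ α·ω_d ≤ min (d-1) 6`. -/
theorem stmt_4 (d : ℕ) (hd1 : 1 ≤ d) (hd9 : d ≤ 9) (n : ℕ) (hn : n = 9 - d)
    (α : V) (h0 : form α omega0 = 0) (h2 : form α α = -2)
    (hm1 : 1 ≤ form α (omegaV n))
    (hm2 : form α (omegaV n) ≤ min ((d : ℤ) - 1) 6) :
    (∃ i j : Fin 9, i ≠ j ∧ α = evec i - evec j) ∨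
    (∃ J : Finset (Fin 9), J.card = 3 ∧ α = hvec - ∑ i ∈ J, evec i) ∨
    (∃ J : Finset (Fin 9), J.card = 6 ∧ α = (2 : ℤ) • hvec - ∑ i ∈ J, evec i) ∨
    (form α (omegaV n) = (d : ℤ) - 1 ∧ (d : ℤ) - 1 ≤ 6 ∧
      ∃ i j : Fin 9, i ≠ j ∧ α = omega0 - evec i + evec j) := by
  have hn9 : n ≤ 9 := by omega
  set S : Finset (Fin 9) := Finset.univ.filter (fun i : Fin 9 => (i : ℕ) < n) with hS
  set m : ℤ := form α (omegaV n) with hm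
  have hm2a : m ≤ (d : ℤ) - 1 := le_trans hm2 (min_le_left _ _)
  have hm2b : m ≤ 6 := le_trans hm2 (min_le_right _ _)
  set a : ℤ := α 0 with ha
  -- linear form computations
  have h0' : 3 * a + ∑ i : Fin 9, α i.succ = 0 := by
    unfold form omega0 at h0
    rw [omegaV_zero] at h0
    have e : ∑ i : Fin 9, α i.succ * omegaV 9 i.succ = ∑ i : Fin 9, -(α i.succ) := by
      refine Finset.sum_congr rfl fun i _ => ?_
      rw [omegaV_succ, if_pos i.isLt]; ring
    rw [e, Finset.sum_neg_distrib] at h0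
    linarith
  have h2' : a^2 - ∑ i : Fin 9, (α i.succ)^2 = -2 := by
    unfold form at h2
    have e : ∑ i : Fin 9, α i.succ * α i.succ = ∑ i : Fin 9, (α i.succ)^2 :=
      Finset.sum_congr rfl fun i _ => by ring
    rw [e] at h2
    nlinarith [h2]
  have hm_eq : m = 3 * a + ∑ i ∈ S, α i.succ := by
    rw [hm]
    unfold form
    rw [omegaV_zero]
    have e : ∑ i : Fin 9, α i.succ * omegaV n i.succ
        = ∑ i : Fin 9, (if (i : ℕ) < n then -(α i.succ) else 0) := by
      refine Finset.sum_congr rfl fun i _ => ?_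
      rw [omegaV_succ]; split <;> ring
    rw [e, ← Finset.sum_filter, Finset.sum_neg_distrib]
    ring
  -- the auxiliary vector u
  set u : Fin 9 → ℤ := fun i => 3 * α i.succ + a with hu
  have hual : ∀ i : Fin 9, u i = 3 * α i.succ + a := fun i => rfl
  have esum : ∑ i : Fin 9, u i = 3 * (∑ i : Fin 9, α i.succ) + 9 * a := by
    rw [hu, Finset.sum_add_distrib, Finset.mul_sum, Finset.sum_const]
    simp only [Finset.card_univ, Fintype.card_fin, nsmul_eq_mul]
    push_cast; ring
  have husum : ∑ i : Fin 9, u i = 0 := by rw [esum]; linarith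
  have husq : ∑ i : Fin 9, (u i)^2 = 18 := by
    have e1 : ∑ i : Fin 9, (u i)^2 = ∑ i : Fin 9, (9 * (α i.succ)^2 + (6 * a) * α i.succ + a^2) :=
      Finset.sum_congr rfl (fun i _ => by rw [hual]; ring)
    have e2 : ∑ i : Fin 9, (9 * (α i.succ)^2 + (6 * a) * α i.succ + a^2)
        = 9 * (∑ i : Fin 9, (α i.succ)^2) + (6 * a) * (∑ i : Fin 9, α i.succ) + 9 * a^2 := by
      rw [Finset.sum_add_distrib, Finset.sum_add_distrib, ← Finset.mul_sum, ← Finset.mul_sum,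
        Finset.sum_const]
      simp only [Finset.card_univ, Fintype.card_fin, nsmul_eq_mul]
      push_cast; ring
    have hc1 : ∑ i : Fin 9, α i.succ = -3 * a := by linarith
    have hc2 : ∑ i : Fin 9, (α i.succ)^2 = a^2 + 2 := by linarith
    rw [e1, e2, hc1, hc2]; ring
  have hub : ∀ j : Fin 9, (u j)^2 ≤ 18 := by
    intro j
    rw [← husq]
    exact Finset.single_le_sum (fun i _ => sq_nonneg (u i)) (Finset.mem_univ j)
  have hbig : (∀ i : Fin 9, u i ≠ 0) → ∀ j : Fin 9, (u j)^2 ≤ 10 := by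
    intro hnz j
    have h8 : (8 : ℤ) ≤ ∑ i ∈ Finset.univ.erase j, (u i)^2 := by
      have hone : ∀ i ∈ Finset.univ.erase j, (1:ℤ) ≤ (u i)^2 := by
        intro i _
        rcases (hnz i).lt_or_gt with h | h <;> nlinarith
      calc (8:ℤ) = (Finset.univ.erase j).card • (1:ℤ) := by simp
        _ ≤ ∑ i ∈ Finset.univ.erase j, (u i)^2 := Finset.card_nsmul_le_sum _ _ _ hone
    have e := Finset.add_sum_erase Finset.univ (fun i => (u i)^2) (Finset.mem_univ j)
    linarith [e, h8, husq]
  have hmod : ∀ i : Fin 9, (u i) % 3 = a % 3 := by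
    intro i; have := hual i; omega
  -- relation between m and the u-values on S
  have hSu : ∑ i ∈ S, u i = 3 * (∑ i ∈ S, α i.succ) + (n : ℤ) * a := by
    rw [hu, Finset.sum_add_distrib, Finset.mul_sum, Finset.sum_const, hS, card_lt n hn9]
    push_cast; ring
  have h3m : 3 * m = (9 - (n : ℤ)) * a + ∑ i ∈ S, u i := by
    rw [hSu]; linarith [hm_eq]
  have hmod3 : a % 3 = 0 ∨ a % 3 = 1 ∨ a % 3 = 2 := by omega
  rcases hmod3 with har | har | har
  -- case a ≡ 0
  · have hval : ∀ j : Fin 9, u j = -3 ∨ u j = 0 ∨ u j = 3 := by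
      intro j
      have h1 := hub j
      have h2 := hmod j
      have h3 : -4 ≤ u j ∧ u j ≤ 4 := by
        constructor <;> by_contra hcon <;> push_neg at hcon <;> nlinarith
      omega
    set T : Finset (Fin 9) := Finset.univ.filter (fun j => ¬ u j = 0) with hT
    have hmemT : ∀ j : Fin 9, j ∈ T ↔ ¬ u j = 0 := by intro j; rw [hT]; simp
    have hTsq : ∑ j ∈ T, (u j)^2 = 18 := by
      have e := Finset.sum_sdiff (Finset.subset_univ T) (f := fun j => (u j)^2)
      have e2 : ∑ j ∈ Finset.univ \ T, (u j)^2 = 0 := by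
        apply Finset.sum_eq_zero
        intro j hj
        rw [Finset.mem_sdiff] at hj
        have hz : u j = 0 := by
          by_contra h
          exact hj.2 ((hmemT j).mpr h)
        rw [hz]
        ring
      rw [e2] at e
      linarith [e, husq]
    have hTval : ∀ j ∈ T, (u j)^2 = 9 := by
      intro j hj
      rcases hval j with h | h | h
      · rw [h]; ring
      · exact absurd h ((hmemT j).mp hj)
      · rw [h]; ring
    have hTcard : T.card = 2 := by
      have e4 : ∑ j ∈ T, (u j)^2 = (T.card : ℤ) * 9 := by
        rw [Finset.sum_congr rfl hTval, Finset.sum_const, nsmul_eq_mul]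
      rw [e4] at hTsq
      omega
    obtain ⟨i0, j0, hij0, hTpair⟩ := Finset.card_eq_two.mp hTcard
    have hiT : i0 ∈ T := by rw [hTpair]; simp
    have hjT : j0 ∈ T := by rw [hTpair]; simp
    have hsum2 : u i0 + u j0 = 0 := by
      have e := Finset.sum_sdiff (Finset.subset_univ T) (f := u)
      have e2 : ∑ j ∈ Finset.univ \ T, u j = 0 := by
        apply Finset.sum_eq_zero
        intro j hj
        rw [Finset.mem_sdiff] at hj
        by_contra h
        exact hj.2 ((hmemT j).mpr h)
      have e3 : ∑ j ∈ T, u j = u i0 + u j0 := by rw [hTpair, Finset.sum_pair hij0]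
      rw [e2, e3, husum] at e
      linarith
    have hz0 : ∀ k : Fin 9, k ≠ i0 → k ≠ j0 → u k = 0 := by
      intro k h1 h2
      by_contra h
      have hkT := (hmemT k).mpr h
      rw [hTpair, Finset.mem_insert, Finset.mem_singleton] at hkT
      tauto
    have hcases : (u i0 = 3 ∧ u j0 = -3) ∨ (u i0 = -3 ∧ u j0 = 3) := by
      have h1 := hval i0
      have h2 := (hmemT i0).mp hiT
      omega
    obtain ⟨p, q, hpq, hup, huq, hz⟩ :
        ∃ p q : Fin 9, p ≠ q ∧ u p = 3 ∧ u q = -3 ∧ ∀ k, k ≠ p → k ≠ q → u k = 0 := by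
      rcases hcases with ⟨h1, h2⟩ | ⟨h1, h2⟩
      · exact ⟨i0, j0, hij0, h1, h2, fun k hk1 hk2 => hz0 k hk1 hk2⟩
      · exact ⟨j0, i0, hij0.symm, h2, h1, fun k hk1 hk2 => hz0 k hk2 hk1⟩
    have hpt : ∀ k : Fin 9, u k = (if k = p then 3 else 0) + (if k = q then -3 else 0) := by
      intro k
      by_cases h1 : k = p
      · subst h1
        rw [if_pos rfl, if_neg hpq]
        omega
      · by_cases h2 : k = q
        · subst h2
          rw [if_neg h1, if_pos rfl]
          omega
        · rw [if_neg h1, if_neg h2]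
          simpa using hz k h1 h2
    have hSsum : ∑ k ∈ S, u k = (if p ∈ S then 3 else 0) + (if q ∈ S then -3 else 0) := by
      rw [Finset.sum_congr rfl (fun k _ => hpt k), Finset.sum_add_distrib,
        Finset.sum_ite_eq', Finset.sum_ite_eq']
    have hkey : a = 0 ∨ (a = 3 ∧ m = (d:ℤ) - 1) := by
      rw [hSsum] at h3m
      have h9n : (9 - (n:ℤ)) = (d:ℤ) := by omega
      rw [h9n] at h3m
      have hep : (if p ∈ S then (3:ℤ) else 0) = 0 ∨ (if p ∈ S then (3:ℤ) else 0) = 3 := by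
        split <;> simp
      have heq : (if q ∈ S then (-3:ℤ) else 0) = 0 ∨ (if q ∈ S then (-3:ℤ) else 0) = -3 := by
        split <;> simp
      interval_cases d <;> omega
    rcases hkey with hA | ⟨hA, hmD⟩
    · left
      refine ⟨p, q, hpq, ?_⟩
      funext k
      induction k using Fin.cases with
      | zero =>
        rw [Pi.sub_apply, evec_zero, evec_zero]
        omega
      | succ l =>
        rw [Pi.sub_apply, evec_succ, evec_succ]
        have h1 := hpt l
        have h2 := hual l
        split_ifs at h1 ⊢ <;> omega
    · right; right; right
      refine ⟨hmD, by linarith, q, p, hpq.symm, ?_⟩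
      funext k
      induction k using Fin.cases with
      | zero =>
        have ho : omega0 0 = 3 := omegaV_zero 9
        rw [Pi.add_apply, Pi.sub_apply, ho, evec_zero, evec_zero]
        omega
      | succ l =>
        have ho : omega0 l.succ = -1 := by
          rw [omega0, omegaV_succ, if_pos l.isLt]
        rw [Pi.add_apply, Pi.sub_apply, ho, evec_succ, evec_succ]
        have h1 := hpt l
        have h2 := hual l
        split_ifs at h1 ⊢ <;> omega
  -- case a ≡ 1 : roots h - e_J
  · have hnz : ∀ i : Fin 9, u i ≠ 0 := by intro i; have := hmod i; omega
    have hb10 := hbig hnz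
    have hval : ∀ j : Fin 9, u j = -2 ∨ u j = 1 := by
      intro j
      have h1 := hb10 j
      have h2 := hmod j
      have h3 : -3 ≤ u j ∧ u j ≤ 3 := by
        constructor <;> by_contra hcon <;> push_neg at hcon <;> nlinarith
      omega
    set J : Finset (Fin 9) := Finset.univ.filter (fun j => u j = -2) with hJ
    have hmemJ : ∀ j : Fin 9, j ∈ J ↔ u j = -2 := by
      intro j; rw [hJ]; simp
    have hJ9 : J.card ≤ 9 := by
      have := Finset.card_le_univ J
      simpa using this
    have hJcard : J.card = 3 := by
      have e := Finset.sum_sdiff (Finset.subset_univ J) (f := u)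
      have e1 : ∑ j ∈ J, u j = (J.card : ℤ) * (-2) := by
        rw [Finset.sum_congr rfl (fun j hj => (hmemJ j).mp hj), Finset.sum_const, nsmul_eq_mul]
      have e2 : ∑ j ∈ Finset.univ \ J, u j = (((Finset.univ \ J).card : ℤ)) * 1 := by
        rw [Finset.sum_congr rfl (fun j hj => ?_), Finset.sum_const, nsmul_eq_mul]
        rw [Finset.mem_sdiff] at hj
        rcases hval j with h | h
        · exact absurd ((hmemJ j).mpr h) hj.2
        · exact h
      have e3 : (Finset.univ \ J).card = 9 - J.card := by
        rw [Finset.card_sdiff_of_subset (Finset.subset_univ J)]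
        simp
      rw [e1, e2, e3, husum] at e
      omega
    -- split the sum over S
    have eS := Finset.sum_sdiff ((Finset.inter_subset_left : S ∩ J ⊆ S)) (f := u)
    have eS1 : ∑ j ∈ S ∩ J, u j = (((S ∩ J).card : ℤ)) * (-2) := by
      rw [Finset.sum_congr rfl (fun j hj => (hmemJ j).mp (Finset.mem_of_mem_inter_right hj)),
        Finset.sum_const, nsmul_eq_mul]
    have eS2 : ∑ j ∈ S \ (S ∩ J), u j = (((S \ (S ∩ J)).card : ℤ)) * 1 := by
      rw [Finset.sum_congr rfl (fun j hj => ?_), Finset.sum_const, nsmul_eq_mul]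
      rw [Finset.mem_sdiff] at hj
      rcases hval j with h | h
      · exact absurd (Finset.mem_inter_of_mem hj.1 ((hmemJ j).mpr h)) hj.2
      · exact h
    have hScap : (S ∩ J).card ≤ n := by
      have := Finset.card_le_card ((Finset.inter_subset_left : S ∩ J ⊆ S))
      rwa [hS, card_lt n hn9] at this
    have ecard : (S \ (S ∩ J)).card = n - (S ∩ J).card := by
      rw [Finset.card_sdiff_of_subset (Finset.inter_subset_left), hS, card_lt n hn9]
    have hcap3 : (S ∩ J).card ≤ 3 := by
      have := Finset.card_le_card ((Finset.inter_subset_right : S ∩ J ⊆ J))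
      omega
    have hcomm : (J ∩ S).card = (S ∩ J).card := by rw [Finset.inter_comm]
    have hsd : (J \ S).card + (J ∩ S).card = J.card := Finset.card_sdiff_add_card_inter J S
    have hsdle : (J \ S).card ≤ 9 - n := by
      rw [← card_ge n hn9]
      apply Finset.card_le_card
      intro k hk
      rw [Finset.mem_sdiff] at hk
      simp only [Finset.mem_filter, Finset.mem_univ, true_and]
      intro hlt
      exact hk.2 (by rw [hS]; simp [hlt])
    have hkey : a = 1 := by
      rw [eS1, eS2, ecard] at eS
      rw [← eS] at h3m
      have h9n : (9 - (n:ℤ)) = (d:ℤ) := by omega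
      rw [h9n] at h3m
      interval_cases d <;> omega
    right; left
    refine ⟨J, hJcard, ?_⟩
    funext k
    induction k using Fin.cases with
    | zero =>
      have hrhs : (hvec - ∑ i ∈ J, evec i) 0 = 1 := by
        simp [Pi.sub_apply, Finset.sum_apply, hvec_zero, evec_zero]
      rw [hrhs, ← ha, hkey]
    | succ l =>
      have hrhs : (hvec - ∑ i ∈ J, evec i) l.succ = -(if l ∈ J then 1 else 0) := by
        simp only [Pi.sub_apply, Finset.sum_apply, hvec_succ, evec_succ]
        rw [Finset.sum_ite_eq]
        split <;> simp
      rw [hrhs]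
      have hul := hual l
      by_cases hl : l ∈ J
      · have := (hmemJ l).mp hl
        rw [if_pos hl]; omega
      · have : u l = 1 := by
          rcases hval l with h | h
          · exact absurd ((hmemJ l).mpr h) hl
          · exact h
        rw [if_neg hl]; omega
  -- case a ≡ 2 : roots 2h - e_J
  · have hnz : ∀ i : Fin 9, u i ≠ 0 := by intro i; have := hmod i; omega
    have hb10 := hbig hnz
    have hval : ∀ j : Fin 9, u j = -1 ∨ u j = 2 := by
      intro j
      have h1 := hb10 j
      have h2 := hmod j
      have h3 : -3 ≤ u j ∧ u j ≤ 3 := by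
        constructor <;> by_contra hcon <;> push_neg at hcon <;> nlinarith
      omega
    set J : Finset (Fin 9) := Finset.univ.filter (fun j => u j = -1) with hJ
    have hmemJ : ∀ j : Fin 9, j ∈ J ↔ u j = -1 := by
      intro j; rw [hJ]; simp
    have hJ9 : J.card ≤ 9 := by
      have := Finset.card_le_univ J
      simpa using this
    have hJcard : J.card = 6 := by
      have e := Finset.sum_sdiff (Finset.subset_univ J) (f := u)
      have e1 : ∑ j ∈ J, u j = (J.card : ℤ) * (-1) := by
        rw [Finset.sum_congr rfl (fun j hj => (hmemJ j).mp hj), Finset.sum_const, nsmul_eq_mul]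
      have e2 : ∑ j ∈ Finset.univ \ J, u j = (((Finset.univ \ J).card : ℤ)) * 2 := by
        rw [Finset.sum_congr rfl (fun j hj => ?_), Finset.sum_const, nsmul_eq_mul]
        rw [Finset.mem_sdiff] at hj
        rcases hval j with h | h
        · exact absurd ((hmemJ j).mpr h) hj.2
        · exact h
      have e3 : (Finset.univ \ J).card = 9 - J.card := by
        rw [Finset.card_sdiff_of_subset (Finset.subset_univ J)]
        simp
      rw [e1, e2, e3, husum] at e
      omega
    have eS := Finset.sum_sdiff ((Finset.inter_subset_left : S ∩ J ⊆ S)) (f := u)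
    have eS1 : ∑ j ∈ S ∩ J, u j = (((S ∩ J).card : ℤ)) * (-1) := by
      rw [Finset.sum_congr rfl (fun j hj => (hmemJ j).mp (Finset.mem_of_mem_inter_right hj)),
        Finset.sum_const, nsmul_eq_mul]
    have eS2 : ∑ j ∈ S \ (S ∩ J), u j = (((S \ (S ∩ J)).card : ℤ)) * 2 := by
      rw [Finset.sum_congr rfl (fun j hj => ?_), Finset.sum_const, nsmul_eq_mul]
      rw [Finset.mem_sdiff] at hj
      rcases hval j with h | h
      · exact absurd (Finset.mem_inter_of_mem hj.1 ((hmemJ j).mpr h)) hj.2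
      · exact h
    have hScap : (S ∩ J).card ≤ n := by
      have := Finset.card_le_card ((Finset.inter_subset_left : S ∩ J ⊆ S))
      rwa [hS, card_lt n hn9] at this
    have ecard : (S \ (S ∩ J)).card = n - (S ∩ J).card := by
      rw [Finset.card_sdiff_of_subset (Finset.inter_subset_left), hS, card_lt n hn9]
    have hcap6 : (S ∩ J).card ≤ 6 := by
      have := Finset.card_le_card ((Finset.inter_subset_right : S ∩ J ⊆ J))
      omega
    have hcomm : (J ∩ S).card = (S ∩ J).card := by rw [Finset.inter_comm]
    have hsd : (J \ S).card + (J ∩ S).card = J.card := Finset.card_sdiff_add_card_inter J S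
    have hsdle : (J \ S).card ≤ 9 - n := by
      rw [← card_ge n hn9]
      apply Finset.card_le_card
      intro k hk
      rw [Finset.mem_sdiff] at hk
      simp only [Finset.mem_filter, Finset.mem_univ, true_and]
      intro hlt
      exact hk.2 (by rw [hS]; simp [hlt])
    have hkey : a = 2 := by
      rw [eS1, eS2, ecard] at eS
      rw [← eS] at h3m
      have h9n : (9 - (n:ℤ)) = (d:ℤ) := by omega
      rw [h9n] at h3m
      interval_cases d <;> omega
    right; right; left
    refine ⟨J, hJcard, ?_⟩
    funext k
    induction k using Fin.cases with
    | zero =>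
      have hrhs : ((2:ℤ) • hvec - ∑ i ∈ J, evec i) 0 = 2 := by
        simp [Pi.sub_apply, Pi.smul_apply, Finset.sum_apply, hvec_zero, evec_zero]
      rw [hrhs, ← ha, hkey]
    | succ l =>
      have hrhs : ((2:ℤ) • hvec - ∑ i ∈ J, evec i) l.succ = -(if l ∈ J then 1 else 0) := by
        simp only [Pi.sub_apply, Pi.smul_apply, Finset.sum_apply, hvec_succ, evec_succ,
          smul_eq_mul, mul_zero]
        rw [Finset.sum_ite_eq]
        split <;> simp
      rw [hrhs]
      have hul := hual l
      by_cases hl : l ∈ J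
      · have := (hmemJ l).mp hl
        rw [if_pos hl]; omega
      · have : u l = 2 := by
          rcases hval l with h | h
          · exact absurd ((hmemJ l).mpr h) hl
          · exact h
        rw [if_neg hl]; omega
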